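/- Let G be a finite simple graph without isolated vertices, let D be an optimal dominating set in G, and let a be the number of isolated vertices of the induced subgraph G[D]. Then either G has an independent set S such that every vertex of D ∖ S has a neighbor in S ∖ D, or all of the following hold: (1) a + 1 ≤ α(G[D]) ≤ |D| − 3; (2) |V(G)| + a ≥ 3|D|; (3) |D| ≥ a + 5. -/

import Mathlib

set_option linter.unusedSectionVars false
set_option maxHeartbeats 2000000

/-- `D` is a dominating set of `G`: every vertex lies in `D` or has a neighbor in `D`. -/
def IsDomSet {V : Type*} (G : SimpleGraph V) (D : Set V) : Prop :=
  ∀ v : V, v ∈ D ∨ ∃ u ∈ D, G.Adj u v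

/-- `S` is an independent set of `G`. -/
def IsIndep {V : Type*} (G : SimpleGraph V) (S : Set V) : Prop :=
  S.Pairwise fun u v => ¬ G.Adj u v

/-- The domination number of `G`: the minimum size of a dominating set. -/
noncomputable def gamma {V : Type*} (G : SimpleGraph V) : ℕ :=
  sInf {n | ∃ D : Set V, IsDomSet G D ∧ D.ncard = n}

/-- The independence number of `G`: the maximum size of an independent set. -/
noncomputable def alpha {V : Type*} (G : SimpleGraph V) : ℕ :=
  sSup {n | ∃ S : Set V, IsIndep G S ∧ S.ncard = n}

/-- The inverse domination number of `G`: the minimum size of a dominating set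
disjoint from some minimum dominating set. -/
noncomputable def invGamma {V : Type*} (G : SimpleGraph V) : ℕ :=
  sInf {n | ∃ D T : Set V, IsDomSet G D ∧ D.ncard = gamma G ∧
    IsDomSet G T ∧ D ∩ T = ∅ ∧ T.ncard = n}

/-- The independence number of the subgraph of `G` induced by `D`. -/
noncomputable def alphaOn {V : Type*} (G : SimpleGraph V) (D : Set V) : ℕ :=
  sSup {n | ∃ S : Set V, S ⊆ D ∧ IsIndep G S ∧ S.ncard = n}

/-- The number of edges of the subgraph of `G` induced by `D`. -/
noncomputable def edgeCountOn {V : Type*} (G : SimpleGraph V) (D : Set V) : ℕ :=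
  {e ∈ G.edgeSet | ∀ v ∈ e, v ∈ D}.ncard

/-- `D` is an optimal dominating set: of minimum size; among those, `G[D]` has
maximum independence number; and subject to that, `G[D]` has fewest edges. -/
def IsOptimalDomSet {V : Type*} (G : SimpleGraph V) (D : Set V) : Prop :=
  IsDomSet G D ∧ D.ncard = gamma G ∧
  (∀ D' : Set V, IsDomSet G D' → D'.ncard = gamma G → alphaOn G D' ≤ alphaOn G D) ∧
  (∀ D' : Set V, IsDomSet G D' → D'.ncard = gamma G →
    alphaOn G D' = alphaOn G D → edgeCountOn G D ≤ edgeCountOn G D')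

/-- `w` is a private neighbor of `v` with respect to `D`: `w ∉ D` and `N(w) ∩ D = {v}`. -/
def IsPrivateNbr {V : Type*} (G : SimpleGraph V) (D : Set V) (v w : V) : Prop :=
  w ∉ D ∧ G.Adj v w ∧ ∀ u ∈ D, G.Adj u w → u = v

/-- `R` is a partial independent set of representatives (partial ISR) for the family `P`:
an independent set consisting of distinct representatives of some subfamily of `P`. -/
def IsPartialISR {V : Type*} (G : SimpleGraph V) {n : ℕ} (P : Fin n → Set V)
    (R : Set V) : Prop :=
  IsIndep G R ∧ ∃ (J : Set (Fin n)) (x : Fin n → V),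
    Set.InjOn x J ∧ (∀ j ∈ J, x j ∈ P j) ∧ R = x '' J

/-- `b(G)`: the largest number of vertices of an induced bipartite subgraph of `G`. -/
noncomputable def bipNum {V : Type*} (G : SimpleGraph V) : ℕ :=
  sSup {n | ∃ B A : Set V, A ⊆ B ∧ IsIndep G A ∧ IsIndep G (B \ A) ∧ B.ncard = n}

section Helpers
variable {V : Type*} [Fintype V] {G : SimpleGraph V}

lemma gamma_le {D : Set V} (h : IsDomSet G D) : gamma G ≤ D.ncard :=
  Nat.sInf_le ⟨D, h, rfl⟩

lemma not_domset_of_lt {E : Set V} (h : E.ncard < gamma G) : ¬ IsDomSet G E :=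
  fun hd => absurd (gamma_le hd) (by omega)

lemma bddAbove_alphaSet (D : Set V) :
    BddAbove {n | ∃ S : Set V, S ⊆ D ∧ IsIndep G S ∧ S.ncard = n} := by
  refine ⟨Fintype.card V, ?_⟩
  rintro n ⟨S, _, _, rfl⟩
  have := Set.ncard_le_ncard (Set.subset_univ S) Set.finite_univ
  simpa [Set.ncard_univ, Nat.card_eq_fintype_card] using this

lemma le_alphaOn {D S : Set V} (hS : S ⊆ D) (hi : IsIndep G S) : S.ncard ≤ alphaOn G D :=
  le_csSup (bddAbove_alphaSet D) ⟨S, hS, hi, rfl⟩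

lemma alphaOn_exists (G : SimpleGraph V) (D : Set V) :
    ∃ I : Set V, I ⊆ D ∧ IsIndep G I ∧ I.ncard = alphaOn G D := by
  have h := Nat.sSup_mem (s := {n | ∃ S : Set V, S ⊆ D ∧ IsIndep G S ∧ S.ncard = n})
    ⟨0, ∅, by simp, by simp [IsIndep], by simp⟩ (bddAbove_alphaSet D)
  obtain ⟨S, h1, h2, h3⟩ := h
  exact ⟨S, h1, h2, h3⟩

lemma indep_insert {S : Set V} {x : V} (hS : IsIndep G S) (hx : ∀ y ∈ S, ¬ G.Adj x y) :
    IsIndep G (insert x S) := by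
  have hsymm : Symmetric (fun u v : V => ¬ G.Adj u v) := fun u v h hadj => h hadj.symm
  haveI : Std.Symm (fun u v : V => ¬ G.Adj u v) := ⟨fun _ _ h => hsymm h⟩
  rw [IsIndep, Set.pairwise_insert_of_symm]
  exact ⟨hS, fun b hb _ => hx b hb⟩

lemma ncard_drop {β : Type*} [Finite β] {s s' T U : Set β}
    (hsub : s' ⊆ (s \ T) ∪ U) (hT : T ⊆ s) (hUT : U.ncard < T.ncard) :
    s'.ncard < s.ncard := by
  have h1 : s'.ncard ≤ ((s \ T) ∪ U).ncard := Set.ncard_le_ncard hsub (Set.toFinite _)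
  have h1' : ((s \ T) ∪ U).ncard ≤ (s \ T).ncard + U.ncard := Set.ncard_union_le _ _
  have h2 : (s \ T).ncard = s.ncard - T.ncard := Set.ncard_diff hT (Set.toFinite _)
  have h3 : T.ncard ≤ s.ncard := Set.ncard_le_ncard hT (Set.toFinite _)
  omega

lemma sym2_ne {β : Type*} {a b c d : β} (h1 : a ≠ c) (h2 : a ≠ d) : s(a, b) ≠ s(c, d) := by
  intro h
  rw [Sym2.eq_iff] at h
  rcases h with ⟨h, -⟩ | ⟨h, -⟩
  · exact h1 h
  · exact h2 h

lemma sym2_ne' {β : Type*} {a b c d : β} (h1 : b ≠ c) (h2 : b ≠ d) : s(a, b) ≠ s(c, d) := by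
  intro h
  rw [Sym2.eq_iff] at h
  rcases h with ⟨-, h⟩ | ⟨-, h⟩
  · exact h2 h
  · exact h1 h

lemma mem_edgeFilter {E : Set V} {u w : V} :
    s(u, w) ∈ {e ∈ G.edgeSet | ∀ v ∈ e, v ∈ E} ↔ G.Adj u w ∧ u ∈ E ∧ w ∈ E := by
  simp [Sym2.mem_iff, SimpleGraph.mem_edgeSet]

end Helpers

theorem big_lemma {V : Type*} [Fintype V] (G : SimpleGraph V)
    (hiso : ∀ v : V, ∃ u, G.Adj v u)
    (D : Set V) (hopt : IsOptimalDomSet G D)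
    (a : ℕ) (ha : a = {v ∈ D | ∀ u ∈ D, ¬ G.Adj v u}.ncard) :
    (∃ S : Set V, IsIndep G S ∧ ∀ v ∈ D \ S, ∃ u ∈ S \ D, G.Adj u v) ∨
      ((a + 1 ≤ alphaOn G D ∧ alphaOn G D + 3 ≤ D.ncard) ∧
        3 * D.ncard ≤ Fintype.card V + a ∧
        a + 5 ≤ D.ncard) := by
  classical
  by_cases hL : (∃ S : Set V, IsIndep G S ∧ ∀ v ∈ D \ S, ∃ u ∈ S \ D, G.Adj u v)
  · exact Or.inl hL
  right
  obtain ⟨hdom, hγ, hmax, hmin⟩ := hopt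
  set A : Set V := {v ∈ D | ∀ u ∈ D, ¬ G.Adj v u} with hA
  have hAsub : A ⊆ D := fun v hv => hv.1
  have hAnon : ∀ u ∈ A, ∀ y ∈ D, ¬ G.Adj u y := fun u hu => hu.2
  have hAindep : IsIndep G A := fun u hu w hw _ => hAnon u hu w (hAsub hw)
  obtain ⟨I0, hI0D, hI0i, hI0c⟩ := alphaOn_exists G D
  set I : Set V := I0 ∪ A with hIdef
  have hID : I ⊆ D := Set.union_subset hI0D hAsub
  have hIindep : IsIndep G I := by
    intro u hu w hw hne
    rcases hu with hu | hu
    · rcases hw with hw | hw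
      · exact hI0i hu hw hne
      · exact fun hadj => hAnon w hw u (hID (Or.inl hu)) hadj.symm
    · exact fun hadj => hAnon u hu w (hID hw) hadj
  have hIc : I.ncard = alphaOn G D :=
    le_antisymm (le_alphaOn hID hIindep)
      (hI0c ▸ Set.ncard_le_ncard Set.subset_union_left (Set.toFinite _))
  have hAI : A ⊆ I := Set.subset_union_right
  -- private neighbors exist
  have hpriv : ∀ v ∈ D \ A, ∃ p, IsPrivateNbr G D v p := by
    intro v hv
    obtain ⟨hvD, hvA⟩ := hv
    have hu0 : ∃ u ∈ D, G.Adj v u := by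
      by_contra hc
      push_neg at hc
      exact hvA ⟨hvD, hc⟩
    obtain ⟨u0, hu0D, hu0adj⟩ := hu0
    have hu0v : u0 ≠ v := hu0adj.ne.symm
    have hlt : (D \ {v}).ncard < gamma G := by
      rw [← hγ]; exact Set.ncard_diff_singleton_lt_of_mem hvD (Set.toFinite _)
    have hnd := not_domset_of_lt hlt
    rw [IsDomSet] at hnd; push_neg at hnd
    obtain ⟨y, hy1, hy2⟩ := hnd
    have hyv : y ≠ v := by
      rintro rfl
      exact hy2 u0 ⟨hu0D, by simp [hu0v]⟩ hu0adj.symm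
    have hyD : y ∉ D := by
      intro hyD
      exact hy1 ⟨hyD, by simp [hyv]⟩
    have hadjvy : ∀ u ∈ D, G.Adj u y → u = v := by
      intro u huD hadj
      by_contra hne
      exact hy2 u ⟨huD, by simp [hne]⟩ hadj
    rcases hdom y with h | ⟨u, huD, hadj⟩
    · exact absurd h hyD
    · exact ⟨y, hyD, (hadjvy u huD hadj) ▸ hadj, hadjvy⟩
  have hprivnon : ∀ v p, IsPrivateNbr G D v p → ∀ y ∈ D, y ≠ v → ¬ G.Adj p y :=
    fun v p hp y hyD hne hadj => hne (hp.2.2 y hyD hadj.symm)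
  -- bullet A1
  have bulletA1 : a + 1 ≤ alphaOn G D := by
    by_cases hDA : D ⊆ A
    · exfalso
      refine hL ⟨D, ?_, ?_⟩
      · intro u hu w hw hne
        exact hAnon u (hDA hu) w hw
      · intro v hv
        exact absurd hv.1 hv.2
    · obtain ⟨v, hvD, hvA⟩ := Set.not_subset.mp hDA
      have hsub : insert v A ⊆ D := Set.insert_subset hvD hAsub
      have hi : IsIndep G (insert v A) :=
        indep_insert hAindep (fun y hy hadj => hAnon y hy v hvD hadj.symm)
      have hc : (insert v A).ncard = a + 1 := by
        rw [Set.ncard_insert_of_notMem hvA (Set.toFinite _), ha]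
      have := le_alphaOn hsub hi
      omega

  set B : Set V := D \ I with hBdef
  have hBD : B ⊆ D := Set.diff_subset
  have hBI : ∀ v ∈ B, v ∉ I := fun v hv => hv.2
  have hBA : ∀ v ∈ B, v ∉ A := fun v hv h => hv.2 (hAI h)
  have hBcard : B.ncard = D.ncard - I.ncard := Set.ncard_diff hID (Set.toFinite _)
  have hIcard_le : I.ncard ≤ D.ncard := Set.ncard_le_ncard hID (Set.toFinite _)
  have hb3 : 3 ≤ B.ncard := by
    by_contra hb
    push_neg at hb
    have hcases : B.ncard = 0 ∨ B.ncard = 1 ∨ B.ncard = 2 := by omega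
    rcases hcases with h0 | h1 | h2
    · have hBe : B = ∅ := (Set.ncard_eq_zero (Set.toFinite _)).mp h0
      refine hL ⟨I, hIindep, ?_⟩
      intro v hv
      exfalso
      have hvB : v ∈ B := ⟨hv.1, hv.2⟩
      rw [hBe] at hvB
      exact hvB
    · obtain ⟨v, hBv⟩ := Set.ncard_eq_one.mp h1
      have hvB : v ∈ B := by rw [hBv]; rfl
      obtain ⟨p, hp⟩ := hpriv v ⟨hBD hvB, hBA v hvB⟩
      refine hL ⟨insert p I, indep_insert hIindep
        (fun y hy => hprivnon v p hp y (hID hy) (fun h => hBI v hvB (h ▸ hy))), ?_⟩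
      intro w hw
      have hwB : w ∈ B := ⟨hw.1, fun h => hw.2 (Set.mem_insert_of_mem _ h)⟩
      rw [hBv] at hwB
      rcases hwB with rfl
      exact ⟨p, ⟨Set.mem_insert _ _, hp.1⟩, hp.2.1.symm⟩
    · obtain ⟨v, w, hvw, hBvw⟩ := Set.ncard_eq_two.mp h2
      have hvB : v ∈ B := by rw [hBvw]; left; rfl
      have hwB : w ∈ B := by rw [hBvw]; right; rfl
      by_cases hex : ∃ p q, IsPrivateNbr G D v p ∧ IsPrivateNbr G D w q ∧ ¬ G.Adj p q
      · obtain ⟨p, q, hp, hq, hpq⟩ := hex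
        have hqI : IsIndep G (insert q I) := indep_insert hIindep
          (fun y hy => hprivnon w q hq y (hID hy) (fun h => hBI w hwB (h ▸ hy)))
        have hSi : IsIndep G (insert p (insert q I)) := by
          refine indep_insert hqI ?_
          rintro y (rfl | hy)
          · exact hpq
          · exact hprivnon v p hp y (hID hy) (fun h => hBI v hvB (h ▸ hy))
        refine hL ⟨_, hSi, ?_⟩
        intro x hx
        have hxB : x ∈ B :=
          ⟨hx.1, fun h => hx.2 (Set.mem_insert_of_mem _ (Set.mem_insert_of_mem _ h))⟩
        rw [hBvw] at hxB
        rcases hxB with rfl | rfl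
        · exact ⟨p, ⟨Set.mem_insert _ _, hp.1⟩, hp.2.1.symm⟩
        · exact ⟨q, ⟨Set.mem_insert_of_mem _ (Set.mem_insert _ _), hq.1⟩, hq.2.1.symm⟩
      · push_neg at hex
        obtain ⟨q1, hq1⟩ := hpriv w ⟨hBD hwB, hBA w hwB⟩
        have hq1D : q1 ∉ D := hq1.1
        set D' : Set V := insert q1 (D \ {v}) with hD'def
        have hvnA : v ∉ A := hBA v hvB
        have hvD : v ∈ D := hBD hvB
        have hu0 : ∃ u ∈ D, G.Adj v u := by
          by_contra hc
          push_neg at hc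
          exact hvnA ⟨hvD, hc⟩
        obtain ⟨u0, hu0D, hu0adj⟩ := hu0
        have hu0v : u0 ≠ v := hu0adj.ne.symm
        have hdom' : IsDomSet G D' := by
          intro y
          by_cases hyD' : y ∈ D'
          · exact Or.inl hyD'
          right
          by_cases hyv : y = v
          · subst hyv
            exact ⟨u0, Set.mem_insert_of_mem _ ⟨hu0D, by simp [hu0v]⟩, hu0adj.symm⟩
          rcases hdom y with hyD | ⟨u, huD, hadj⟩
          · exact absurd (show y ∈ D' from Set.mem_insert_of_mem _ ⟨hyD, by simp [hyv]⟩) hyD'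
          by_cases hall : ∀ u' ∈ D, G.Adj u' y → u' = v
          · have hyND : y ∉ D := fun h => hyD' (show y ∈ D' from Set.mem_insert_of_mem _ ⟨h, by simp [hyv]⟩)
            have hypriv : IsPrivateNbr G D v y := ⟨hyND, (hall u huD hadj) ▸ hadj, hall⟩
            have := hex y q1 hypriv hq1
            exact ⟨q1, Set.mem_insert _ _, this.symm⟩
          · push_neg at hall
            obtain ⟨u', hu'D, hu'adj, hu'v⟩ := hall
            exact ⟨u', Set.mem_insert_of_mem _ ⟨hu'D, by simp [hu'v]⟩, hu'adj⟩
        have hcard' : D'.ncard = gamma G := by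
          have h1 : (D \ {v}).ncard = D.ncard - 1 :=
            Set.ncard_diff_singleton_of_mem hvD
          have h2 : q1 ∉ D \ {v} := fun h => hq1D h.1
          have h3 : D'.ncard = (D \ {v}).ncard + 1 := by
            rw [hD'def, Set.ncard_insert_of_notMem h2 (Set.toFinite _)]
          have hDpos : 0 < D.ncard := (Set.ncard_pos (Set.toFinite _)).mpr ⟨v, hvD⟩
          omega
        have hsub : insert q1 I ⊆ D' := by
          intro y hy
          rcases hy with rfl | hy
          · exact Set.mem_insert _ _
          · exact Set.mem_insert_of_mem _ ⟨hID hy, fun h => hBI v hvB ((Set.mem_singleton_iff.mp h) ▸ hy)⟩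
        have hi : IsIndep G (insert q1 I) := indep_insert hIindep
          (fun y hy => hprivnon w q1 hq1 y (hID hy) (fun h => hBI w hwB (h ▸ hy)))
        have hc : (insert q1 I).ncard = alphaOn G D + 1 := by
          rw [Set.ncard_insert_of_notMem (fun h => hq1D (hID h)) (Set.toFinite _), hIc]
        have hle := le_alphaOn hsub hi
        have := hmax D' hdom' hcard'
        omega
  have bulletA2 : alphaOn G D + 3 ≤ D.ncard := by
    have h1 := hIc
    omega

  -- each vertex of D \ A has two distinct private neighbors
  have hpair : ∀ v ∈ D \ A, ∃ p q, IsPrivateNbr G D v p ∧ IsPrivateNbr G D v q ∧ p ≠ q := by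
    intro v hv
    obtain ⟨p0, hp0⟩ := hpriv v hv
    by_cases hcov : ∀ q, IsPrivateNbr G D v q → q = p0 ∨ G.Adj p0 q
    · exfalso
      obtain ⟨hvD, hvA⟩ := hv
      set D' : Set V := insert p0 (D \ {v}) with hD'def
      have hu0 : ∃ u ∈ D, G.Adj v u := by
        by_contra hc
        push_neg at hc
        exact hvA ⟨hvD, hc⟩
      obtain ⟨u0, hu0D, hu0adj⟩ := hu0
      have hu0v : u0 ≠ v := hu0adj.ne.symm
      have hp0D : p0 ∉ D := hp0.1
      have hdom' : IsDomSet G D' := by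
        intro y
        by_cases hyD' : y ∈ D'
        · exact Or.inl hyD'
        right
        by_cases hyv : y = v
        · subst hyv
          exact ⟨p0, Set.mem_insert _ _, hp0.2.1.symm⟩
        rcases hdom y with hyD | ⟨u, huD, hadj⟩
        · exact absurd (show y ∈ D' from Set.mem_insert_of_mem _ ⟨hyD, by simp [hyv]⟩) hyD'
        by_cases hall : ∀ u' ∈ D, G.Adj u' y → u' = v
        · have hyND : y ∉ D := fun h =>
            hyD' (show y ∈ D' from Set.mem_insert_of_mem _ ⟨h, by simp [hyv]⟩)
          have hypriv : IsPrivateNbr G D v y := ⟨hyND, (hall u huD hadj) ▸ hadj, hall⟩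
          rcases hcov y hypriv with rfl | hadj0
          · exact absurd (Set.mem_insert _ _) hyD'
          · exact ⟨p0, Set.mem_insert _ _, hadj0⟩
        · push_neg at hall
          obtain ⟨u', hu'D, hu'adj, hu'v⟩ := hall
          exact ⟨u', Set.mem_insert_of_mem _ ⟨hu'D, by simp [hu'v]⟩, hu'adj⟩
      have hcard' : D'.ncard = gamma G := by
        have h1 : (D \ {v}).ncard = D.ncard - 1 :=
          Set.ncard_diff_singleton_of_mem hvD
        have h2 : p0 ∉ D \ {v} := fun h => hp0D h.1
        have h3 : D'.ncard = (D \ {v}).ncard + 1 := by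
          rw [hD'def, Set.ncard_insert_of_notMem h2 (Set.toFinite _)]
        have hDpos : 0 < D.ncard := (Set.ncard_pos (Set.toFinite _)).mpr ⟨v, hvD⟩
        omega
      have halge : alphaOn G D ≤ alphaOn G D' := by
        by_cases hvI : v ∈ I
        · have hsub : insert p0 (I \ {v}) ⊆ D' := by
            intro y hy
            rcases hy with rfl | hy
            · exact Set.mem_insert _ _
            · exact Set.mem_insert_of_mem _ ⟨hID hy.1, hy.2⟩
          have hi : IsIndep G (insert p0 (I \ {v})) := by
            refine indep_insert (hIindep.mono Set.diff_subset) ?_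
            intro y hy
            exact hprivnon v p0 hp0 y (hID hy.1) (by simpa using hy.2)
          have hc : (insert p0 (I \ {v})).ncard = I.ncard := by
            have h1 : (I \ {v}).ncard = I.ncard - 1 :=
              Set.ncard_diff_singleton_of_mem hvI
            have h2 : p0 ∉ I \ {v} := fun h => hp0D (hID h.1)
            have hIpos : 0 < I.ncard := (Set.ncard_pos (Set.toFinite _)).mpr ⟨v, hvI⟩
            rw [Set.ncard_insert_of_notMem h2 (Set.toFinite _), h1]
            omega
          have := le_alphaOn hsub hi
          omega
        · have hsub : I ⊆ D' := fun y hy =>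
            Set.mem_insert_of_mem _ ⟨hID hy, fun h => hvI ((Set.mem_singleton_iff.mp h) ▸ hy)⟩
          have := le_alphaOn hsub hIindep
          omega
      have haleq : alphaOn G D' = alphaOn G D := le_antisymm (hmax D' hdom' hcard') halge
      have hmle := hmin D' hdom' hcard' haleq
      have hdrop : edgeCountOn G D' < edgeCountOn G D := by
        have hkey : ∀ w1 w2 : V, G.Adj w1 w2 → w1 ∈ D' → w2 ∈ D' → w1 ∈ D \ {v} := by
          intro w1 w2 hadj h1 h2
          rcases h1 with rfl | h1
          · exfalso
            rcases h2 with rfl | h2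
            · exact G.irrefl hadj
            · exact absurd (hp0.2.2 w2 h2.1 hadj.symm) (by simpa using h2.2)
          · exact h1
        have hsub : {e ∈ G.edgeSet | ∀ x ∈ e, x ∈ D'} ⊆
            {e ∈ G.edgeSet | ∀ x ∈ e, x ∈ D} \ {s(v, u0)} := by
          intro e he
          induction e using Sym2.ind with
          | _ x y =>
            rw [mem_edgeFilter] at he
            obtain ⟨hadj, hx, hy⟩ := he
            have hx' := hkey x y hadj hx hy
            have hy' := hkey y x hadj.symm hy hx
            constructor
            · exact mem_edgeFilter.mpr ⟨hadj, hx'.1, hy'.1⟩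
            · intro hmem
              have heq : s(x, y) = s(v, u0) := Set.mem_singleton_iff.mp hmem
              rw [Sym2.eq_iff] at heq
              rcases heq with ⟨h1, _⟩ | ⟨_, h2⟩
              · exact absurd h1 (by simpa using hx'.2)
              · exact absurd h2 (by simpa using hy'.2)
        calc edgeCountOn G D' ≤ ({e ∈ G.edgeSet | ∀ x ∈ e, x ∈ D} \ {s(v, u0)}).ncard :=
              Set.ncard_le_ncard hsub (Set.toFinite _)
          _ < edgeCountOn G D :=
              Set.ncard_diff_singleton_lt_of_mem
                (mem_edgeFilter.mpr ⟨hu0adj, hvD, hu0D⟩) (Set.toFinite _)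
      omega
    · push_neg at hcov
      obtain ⟨q, hq, hq1, hq2⟩ := hcov
      exact ⟨p0, q, hp0, hq, fun h => hq1 h.symm⟩
  -- the external neighborhood of A is large
  set NA : Set V := {y | y ∉ D ∧ ∃ u ∈ A, G.Adj u y} with hNAdef
  have hNAcard : a ≤ NA.ncard := by
    set Dstar : Set V := (D \ A) ∪ NA with hDstar
    have hdomstar : IsDomSet G Dstar := by
      intro y
      by_cases hyD : y ∈ D
      · by_cases hyA : y ∈ A
        · right
          obtain ⟨t, ht⟩ := hiso y
          have htD : t ∉ D := fun h => hAnon y hyA t h ht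
          exact ⟨t, Or.inr ⟨htD, y, hyA, ht⟩, ht.symm⟩
        · exact Or.inl (Or.inl ⟨hyD, hyA⟩)
      · rcases hdom y with h | ⟨u, huD, hadj⟩
        · exact absurd h hyD
        by_cases huA : u ∈ A
        · exact Or.inl (Or.inr ⟨hyD, u, huA, hadj⟩)
        · exact Or.inr ⟨u, Or.inl ⟨huD, huA⟩, hadj⟩
    have h1 : gamma G ≤ Dstar.ncard := gamma_le hdomstar
    have h2 : Dstar.ncard ≤ (D \ A).ncard + NA.ncard := Set.ncard_union_le _ _
    have h3 : (D \ A).ncard = D.ncard - a := by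
      rw [Set.ncard_diff hAsub (Set.toFinite _), ha]
    have h4 : a ≤ D.ncard := ha ▸ Set.ncard_le_ncard hAsub (Set.toFinite _)
    omega
  have bullet2 : 3 * D.ncard ≤ Fintype.card V + a := by
    have hpair' : ∀ v : V, ∃ p q : V,
        v ∈ D \ A → (IsPrivateNbr G D v p ∧ IsPrivateNbr G D v q ∧ p ≠ q) := by
      intro v
      by_cases hv : v ∈ D \ A
      · obtain ⟨p, q, h⟩ := hpair v hv
        exact ⟨p, q, fun _ => h⟩
      · exact ⟨v, v, fun h => absurd h hv⟩
    choose f1 f2 hf using hpair'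
    set W1 : Set V := f1 '' (D \ A) with hW1
    set W2 : Set V := f2 '' (D \ A) with hW2
    have hinj1 : Set.InjOn f1 (D \ A) := by
      intro x hx y hy hxy
      have hx1 := (hf x hx).1
      have hy1 := (hf y hy).1
      have : G.Adj x (f1 y) := by rw [← hxy]; exact hx1.2.1
      exact hy1.2.2 x hx.1 this
    have hinj2 : Set.InjOn f2 (D \ A) := by
      intro x hx y hy hxy
      have hx1 := (hf x hx).2.1
      have hy1 := (hf y hy).2.1
      have : G.Adj x (f2 y) := by rw [← hxy]; exact hx1.2.1
      exact hy1.2.2 x hx.1 this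
    have hc1 : W1.ncard = D.ncard - a := by
      rw [hW1, Set.ncard_image_of_injOn hinj1, Set.ncard_diff hAsub (Set.toFinite _), ha]
    have hc2 : W2.ncard = D.ncard - a := by
      rw [hW2, Set.ncard_image_of_injOn hinj2, Set.ncard_diff hAsub (Set.toFinite _), ha]
    have hW1D : ∀ y ∈ W1, y ∉ D := by
      rintro y ⟨v, hv, rfl⟩
      exact (hf v hv).1.1
    have hW2D : ∀ y ∈ W2, y ∉ D := by
      rintro y ⟨v, hv, rfl⟩
      exact (hf v hv).2.1.1
    have hW1NA : ∀ y ∈ W1, y ∉ NA := by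
      rintro y ⟨v, hv, rfl⟩ ⟨_, u, huA, hadj⟩
      exact hv.2 (((hf v hv).1.2.2 u (hAsub huA) hadj) ▸ huA)
    have hW2NA : ∀ y ∈ W2, y ∉ NA := by
      rintro y ⟨v, hv, rfl⟩ ⟨_, u, huA, hadj⟩
      exact hv.2 (((hf v hv).2.1.2.2 u (hAsub huA) hadj) ▸ huA)
    have hd12 : Disjoint W1 W2 := by
      rw [Set.disjoint_left]
      rintro y ⟨v, hv, rfl⟩ ⟨w, hw, hweq⟩
      by_cases hvw : v = w
      · subst hvw
        exact (hf v hv).2.2 hweq.symm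
      · have h1 := (hf v hv).1
        have h2 := (hf w hw).2.1
        have h3 : G.Adj w (f1 v) := by have := h2.2.1; rwa [hweq] at this
        exact hvw ((h1.2.2 w hw.1 h3).symm)
    have hdDNA : Disjoint D NA := by
      rw [Set.disjoint_left]
      intro y hyD hyNA
      exact hyNA.1 hyD
    have hdis1 : Disjoint (D ∪ NA) W1 := by
      rw [Set.disjoint_right]
      intro y hy
      rintro (h | h)
      · exact hW1D y hy h
      · exact hW1NA y hy h
    have hdis2 : Disjoint ((D ∪ NA) ∪ W1) W2 := by
      rw [Set.disjoint_right]
      intro y hy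
      rintro ((h | h) | h)
      · exact hW2D y hy h
      · exact hW2NA y hy h
      · exact Set.disjoint_left.mp hd12 h hy
    have e1 : (D ∪ NA).ncard = D.ncard + NA.ncard :=
      Set.ncard_union_eq hdDNA (Set.toFinite _) (Set.toFinite _)
    have e2 : ((D ∪ NA) ∪ W1).ncard = (D ∪ NA).ncard + W1.ncard :=
      Set.ncard_union_eq hdis1 (Set.toFinite _) (Set.toFinite _)
    have e3 : (((D ∪ NA) ∪ W1) ∪ W2).ncard = ((D ∪ NA) ∪ W1).ncard + W2.ncard :=
      Set.ncard_union_eq hdis2 (Set.toFinite _) (Set.toFinite _)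
    have etot : (((D ∪ NA) ∪ W1) ∪ W2).ncard ≤ Fintype.card V := by
      have := Set.ncard_le_ncard (Set.subset_univ (((D ∪ NA) ∪ W1) ∪ W2)) Set.finite_univ
      simpa [Set.ncard_univ, Nat.card_eq_fintype_card] using this
    have h4 : a ≤ D.ncard := ha ▸ Set.ncard_le_ncard hAsub (Set.toFinite _)
    omega
  have bullet3 : a + 5 ≤ D.ncard := by
    by_contra h5
    push_neg at h5
    have hIAc : (I \ A).ncard = I.ncard - a := by
      rw [Set.ncard_diff hAI (Set.toFinite _), ha]
    have haI : a ≤ I.ncard := ha ▸ Set.ncard_le_ncard hAI (Set.toFinite _)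
    have hIA1 : (I \ A).ncard = 1 := by omega
    have hB3 : B.ncard = 3 := by omega
    have hα1 : alphaOn G D = a + 1 := by omega
    obtain ⟨z, hzIA⟩ := Set.ncard_eq_one.mp hIA1
    obtain ⟨v1, v2, v3, h12, h13, h23, hBeq⟩ := Set.ncard_eq_three.mp hB3
    have hzmem : z ∈ I \ A := by rw [hzIA]; rfl
    have hzI : z ∈ I := hzmem.1
    have hzA : z ∉ A := hzmem.2
    have hzD : z ∈ D := hID hzI
    have hv1B : v1 ∈ B := by rw [hBeq]; left; rfl
    have hv2B : v2 ∈ B := by rw [hBeq]; right; left; rfl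
    have hv3B : v3 ∈ B := by rw [hBeq]; right; right; rfl
    have hv1D : v1 ∈ D := hBD hv1B
    have hv2D : v2 ∈ D := hBD hv2B
    have hv3D : v3 ∈ D := hBD hv3B
    have hv1I : v1 ∉ I := hBI v1 hv1B
    have hv2I : v2 ∉ I := hBI v2 hv2B
    have hv3I : v3 ∉ I := hBI v3 hv3B
    have hv1A : v1 ∉ A := hBA v1 hv1B
    have hv2A : v2 ∉ A := hBA v2 hv2B
    have hv3A : v3 ∉ A := hBA v3 hv3B
    have hz1 : z ≠ v1 := fun h => hv1I (h ▸ hzI)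
    have hz2 : z ≠ v2 := fun h => hv2I (h ▸ hzI)
    have hz3 : z ≠ v3 := fun h => hv3I (h ▸ hzI)
    -- every vertex of B is adjacent to z
    have hzadj : ∀ v ∈ B, G.Adj v z := by
      intro v hvB
      by_contra hnadj
      have hsub : insert v I ⊆ D := Set.insert_subset (hBD hvB) hID
      have hi : IsIndep G (insert v I) := by
        refine indep_insert hIindep ?_
        intro y hy
        by_cases hyA : y ∈ A
        · exact fun hadj => hAnon y hyA v (hBD hvB) hadj.symm
        · have : y ∈ I \ A := ⟨hy, hyA⟩
          rw [hzIA] at this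
          rcases this with rfl
          exact hnadj
      have hc : (insert v I).ncard = alphaOn G D + 1 := by
        rw [Set.ncard_insert_of_notMem (hBI v hvB) (Set.toFinite _), hIc]
      have := le_alphaOn hsub hi
      omega
    -- B is a clique
    have hBadj : ∀ x ∈ B, ∀ y ∈ B, x ≠ y → G.Adj x y := by
      intro x hx y hy hne
      by_contra hnadj
      have hsub : insert x (insert y A) ⊆ D :=
        Set.insert_subset (hBD hx) (Set.insert_subset (hBD hy) hAsub)
      have hiy : IsIndep G (insert y A) :=
        indep_insert hAindep (fun u hu hadj => hAnon u hu y (hBD hy) hadj.symm)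
      have hi : IsIndep G (insert x (insert y A)) := by
        refine indep_insert hiy ?_
        rintro u (rfl | hu)
        · exact hnadj
        · exact fun hadj => hAnon u hu x (hBD hx) hadj.symm
      have hyA : y ∉ A := hBA y hy
      have hxA : x ∉ insert y A := by
        rintro (rfl | hx')
        · exact hne rfl
        · exact hBA x hx hx'
      have hc : (insert x (insert y A)).ncard = a + 2 := by
        rw [Set.ncard_insert_of_notMem hxA (Set.toFinite _),
          Set.ncard_insert_of_notMem hyA (Set.toFinite _), ha]
      have := le_alphaOn hsub hi
      omega
    have hzadj1 : G.Adj v1 z := hzadj v1 hv1B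
    have hzadj2 : G.Adj v2 z := hzadj v2 hv2B
    have hzadj3 : G.Adj v3 z := hzadj v3 hv3B
    have hadj12 : G.Adj v1 v2 := hBadj v1 hv1B v2 hv2B h12
    have hadj13 : G.Adj v1 v3 := hBadj v1 hv1B v3 hv3B h13
    have hadj23 : G.Adj v2 v3 := hBadj v2 hv2B v3 hv3B h23
    -- D \ A = {z, v1, v2, v3}
    have hDA : D \ A = {z, v1, v2, v3} := by
      ext x
      constructor
      · rintro ⟨hxD, hxA⟩
        by_cases hxI : x ∈ I
        · have : x ∈ I \ A := ⟨hxI, hxA⟩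
          rw [hzIA] at this
          rcases this with rfl
          exact Or.inl rfl
        · have : x ∈ B := ⟨hxD, hxI⟩
          rw [hBeq] at this
          rcases this with rfl | rfl | rfl
          · exact Or.inr (Or.inl rfl)
          · exact Or.inr (Or.inr (Or.inl rfl))
          · exact Or.inr (Or.inr (Or.inr rfl))
      · intro hx
        rcases hx with rfl | rfl | rfl | rfl
        · exact ⟨hzD, hzA⟩
        · exact ⟨hv1D, hv1A⟩
        · exact ⟨hv2D, hv2A⟩
        · exact ⟨hv3D, hv3A⟩
    have hQ : ∀ x, x ∉ D → G.Adj z x → G.Adj v3 x →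
        (∀ u ∈ D, G.Adj u x → u = z ∨ u = v3) → False := by
      intro x hxD hzx h3x hux
      have hex_t : ∃ t, IsPrivateNbr G D v2 t ∧ ¬ G.Adj x t ∧ x ≠ t := by
        by_contra hct
        push_neg at hct
        set D' : Set V := insert x (D \ {v2}) with hD'def
        have hdom' : IsDomSet G D' := by
          intro y
          by_cases hyD' : y ∈ D'
          · exact Or.inl hyD'
          right
          by_cases hyv : y = v2
          · subst hyv
            exact ⟨z, Set.mem_insert_of_mem _ ⟨hzD, by simp [hz2]⟩, hzadj2.symm⟩
          rcases hdom y with hyD | ⟨u, huD, hadj⟩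
          · exact absurd (show y ∈ D' from Set.mem_insert_of_mem _ ⟨hyD, by simp [hyv]⟩) hyD'
          by_cases hall : ∀ u' ∈ D, G.Adj u' y → u' = v2
          · have hyND : y ∉ D := fun h =>
              hyD' (show y ∈ D' from Set.mem_insert_of_mem _ ⟨h, by simp [hyv]⟩)
            have hypriv : IsPrivateNbr G D v2 y := ⟨hyND, (hall u huD hadj) ▸ hadj, hall⟩
            by_cases hxy : G.Adj x y
            · exact ⟨x, Set.mem_insert _ _, hxy⟩
            · exact absurd ((hct y hypriv hxy) ▸ (Set.mem_insert x _ : x ∈ D')) hyD'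
          · push_neg at hall
            obtain ⟨u', hu'D, hu'adj, hu'v⟩ := hall
            exact ⟨u', Set.mem_insert_of_mem _ ⟨hu'D, by simp [hu'v]⟩, hu'adj⟩
        have hcard' : D'.ncard = gamma G := by
          have h1 : (D \ {v2}).ncard = D.ncard - 1 :=
            Set.ncard_diff_singleton_of_mem hv2D
          have h2 : x ∉ D \ {v2} := fun h => hxD h.1
          have h3 : D'.ncard = (D \ {v2}).ncard + 1 := by
            rw [hD'def, Set.ncard_insert_of_notMem h2 (Set.toFinite _)]
          have hDpos : 0 < D.ncard := (Set.ncard_pos (Set.toFinite _)).mpr ⟨v2, hv2D⟩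
          omega
        have halge : alphaOn G D ≤ alphaOn G D' := by
          have hsub : I ⊆ D' := fun y hy =>
            Set.mem_insert_of_mem _ ⟨hID hy, fun h => hv2I ((Set.mem_singleton_iff.mp h) ▸ hy)⟩
          have := le_alphaOn hsub hIindep
          omega
        have haleq : alphaOn G D' = alphaOn G D := le_antisymm (hmax D' hdom' hcard') halge
        have hmle := hmin D' hdom' hcard' haleq
        have hTsub : ({s(v2, z), s(v2, v1), s(v2, v3)} : Set (Sym2 V)) ⊆
            {e ∈ G.edgeSet | ∀ w ∈ e, w ∈ D} := by
          rintro e (rfl | rfl | rfl)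
          · exact mem_edgeFilter.mpr ⟨hzadj2, hv2D, hzD⟩
          · exact mem_edgeFilter.mpr ⟨hadj12.symm, hv2D, hv1D⟩
          · exact mem_edgeFilter.mpr ⟨hadj23, hv2D, hv3D⟩
        have hTc : ({s(v2, z), s(v2, v1), s(v2, v3)} : Set (Sym2 V)).ncard = 3 := by
          rw [Set.ncard_insert_of_notMem
              (by simp only [Set.mem_insert_iff, Set.mem_singleton_iff, Sym2.eq_iff]; tauto)
              (Set.toFinite _),
            Set.ncard_insert_of_notMem
              (by simp only [Set.mem_singleton_iff, Sym2.eq_iff]; tauto)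
              (Set.toFinite _),
            Set.ncard_singleton]
        have hUle : ({s(x, z), s(x, v3)} : Set (Sym2 V)).ncard ≤ 2 := by
          refine le_trans (Set.ncard_insert_le _ _) ?_
          simp
        have hsubF : {e ∈ G.edgeSet | ∀ w ∈ e, w ∈ D'} ⊆
            ({e ∈ G.edgeSet | ∀ w ∈ e, w ∈ D} \ {s(v2, z), s(v2, v1), s(v2, v3)}) ∪
            {s(x, z), s(x, v3)} := by
          intro e he
          induction e using Sym2.ind with
          | _ u w =>
            rw [mem_edgeFilter] at he
            obtain ⟨hadj, hu, hw⟩ := he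
            by_cases hu1 : u = x
            · subst hu1
              right
              have hwD : w ∈ D \ {v2} := by
                rcases hw with rfl | hw
                · exact absurd hadj (G.irrefl)
                · exact hw
              rcases hux w hwD.1 hadj.symm with rfl | rfl
              · exact Set.mem_insert _ _
              · exact Set.mem_insert_of_mem _ rfl
            · by_cases hw1 : w = x
              · subst hw1
                right
                have huD : u ∈ D \ {v2} := by
                  rcases hu with rfl | hu
                  · exact absurd rfl hu1
                  · exact hu
                rcases hux u huD.1 hadj with rfl | rfl
                · exact Set.mem_insert_iff.mpr (Or.inl Sym2.eq_swap)
                · exact Set.mem_insert_iff.mpr (Or.inr (Set.mem_singleton_iff.mpr Sym2.eq_swap))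
              · have huD : u ∈ D \ {v2} := by
                  rcases hu with rfl | h
                  · exact absurd rfl hu1
                  · exact h
                have hwD : w ∈ D \ {v2} := by
                  rcases hw with rfl | h
                  · exact absurd rfl hw1
                  · exact h
                left
                refine ⟨mem_edgeFilter.mpr ⟨hadj, huD.1, hwD.1⟩, ?_⟩
                intro hmem
                have h2u : u ≠ v2 := by simpa using huD.2
                have h2w : w ≠ v2 := by simpa using hwD.2
                simp only [Set.mem_insert_iff, Set.mem_singleton_iff, Sym2.eq_iff] at hmem
                tauto
        have hdrop : edgeCountOn G D' < edgeCountOn G D :=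
          ncard_drop hsubF hTsub (by rw [hTc]; omega)
        omega
      obtain ⟨t, ht, hxt, htx⟩ := hex_t
      have htD : t ∉ D := ht.1
      refine hL ⟨insert x (insert t (insert v1 A)), ?_, ?_⟩
      · refine indep_insert (indep_insert (indep_insert hAindep ?_) ?_) ?_
        · intro y hy hadj
          exact hAnon y hy v1 hv1D hadj.symm
        · intro y hy
          rcases hy with h | hy
          · subst h
            intro hadj
            exact h12 (ht.2.2 y hv1D hadj.symm)
          · intro hadj
            exact hv2A ((ht.2.2 y (hAsub hy) hadj.symm) ▸ hy)
        · intro y hy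
          rcases hy with h | h | hy
          · subst h
            exact hxt
          · subst h
            intro hadj
            rcases hux y hv1D hadj.symm with h | h
            · exact hz1 h.symm
            · exact h13 h
          · intro hadj
            rcases hux y (hAsub hy) hadj.symm with rfl | rfl
            · exact hzA hy
            · exact hv3A hy
      · intro y hy
        obtain ⟨hyD, hyS⟩ := hy
        have hyA : y ∉ A := fun h =>
          hyS (Set.mem_insert_of_mem _ (Set.mem_insert_of_mem _ (Set.mem_insert_of_mem _ h)))
        have hyDA : y ∈ ({z, v1, v2, v3} : Set V) := hDA ▸ (⟨hyD, hyA⟩ : y ∈ D \ A)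
        rcases hyDA with rfl | rfl | rfl | rfl
        · exact ⟨x, ⟨Set.mem_insert _ _, hxD⟩, hzx.symm⟩
        · exact absurd
            (Set.mem_insert_of_mem _ (Set.mem_insert_of_mem _ (Set.mem_insert _ _))) hyS
        · exact ⟨t, ⟨Set.mem_insert_of_mem _ (Set.mem_insert _ _), htD⟩, ht.2.1.symm⟩
        · exact ⟨x, ⟨Set.mem_insert _ _, hxD⟩, h3x.symm⟩
    -- a nonadjacent pair of privates of v1 and v2
    have hd : ∃ p1 p2, IsPrivateNbr G D v1 p1 ∧ IsPrivateNbr G D v2 p2 ∧ ¬ G.Adj p1 p2 := by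
      by_contra hc
      push_neg at hc
      obtain ⟨q, hq⟩ := hpriv v2 ⟨hv2D, hv2A⟩
      have hqD : q ∉ D := hq.1
      set D' : Set V := insert q (D \ {v1}) with hD'def
      have hdom' : IsDomSet G D' := by
        intro y
        by_cases hyD' : y ∈ D'
        · exact Or.inl hyD'
        right
        by_cases hyv : y = v1
        · subst hyv
          exact ⟨z, Set.mem_insert_of_mem _ ⟨hzD, by simp [hz1]⟩, hzadj1.symm⟩
        rcases hdom y with hyD | ⟨u, huD, hadj⟩
        · exact absurd (show y ∈ D' from Set.mem_insert_of_mem _ ⟨hyD, by simp [hyv]⟩) hyD'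
        by_cases hall : ∀ u' ∈ D, G.Adj u' y → u' = v1
        · have hyND : y ∉ D := fun h =>
            hyD' (show y ∈ D' from Set.mem_insert_of_mem _ ⟨h, by simp [hyv]⟩)
          have hypriv : IsPrivateNbr G D v1 y := ⟨hyND, (hall u huD hadj) ▸ hadj, hall⟩
          exact ⟨q, Set.mem_insert _ _, (hc y q hypriv hq).symm⟩
        · push_neg at hall
          obtain ⟨u', hu'D, hu'adj, hu'v⟩ := hall
          exact ⟨u', Set.mem_insert_of_mem _ ⟨hu'D, by simp [hu'v]⟩, hu'adj⟩
      have hcard' : D'.ncard = gamma G := by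
        have h1 : (D \ {v1}).ncard = D.ncard - 1 :=
          Set.ncard_diff_singleton_of_mem hv1D
        have h2 : q ∉ D \ {v1} := fun h => hqD h.1
        have h3 : D'.ncard = (D \ {v1}).ncard + 1 := by
          rw [hD'def, Set.ncard_insert_of_notMem h2 (Set.toFinite _)]
        have hDpos : 0 < D.ncard := (Set.ncard_pos (Set.toFinite _)).mpr ⟨v1, hv1D⟩
        omega
      have hsub : insert q I ⊆ D' := by
        intro y hy
        rcases hy with rfl | hy
        · exact Set.mem_insert _ _
        · exact Set.mem_insert_of_mem _
            ⟨hID hy, fun h => hv1I ((Set.mem_singleton_iff.mp h) ▸ hy)⟩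
      have hi : IsIndep G (insert q I) := indep_insert hIindep
        (fun y hy => hprivnon v2 q hq y (hID hy) (fun h => hv2I (h ▸ hy)))
      have hc2 : (insert q I).ncard = alphaOn G D + 1 := by
        rw [Set.ncard_insert_of_notMem (fun h => hqD (hID h)) (Set.toFinite _), hIc]
      have hle := le_alphaOn hsub hi
      have := hmax D' hdom' hcard'
      omega
    obtain ⟨p1, p2, hp1, hp2, hp12⟩ := hd
    have hp1D : p1 ∉ D := hp1.1
    have hp2D : p2 ∉ D := hp2.1
    have hp1p2 : p1 ≠ p2 := fun h => h12 (hp2.2.2 v1 hv1D (by rw [← h]; exact hp1.2.1))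
    -- every private of v3 is adjacent to p1 or p2
    have he3 : ∀ r, IsPrivateNbr G D v3 r → G.Adj p1 r ∨ G.Adj p2 r := by
      intro r hr
      by_contra hcr
      push_neg at hcr
      have hrD : r ∉ D := hr.1
      refine hL ⟨insert p1 (insert p2 (insert r (insert z A))), ?_, ?_⟩
      · refine indep_insert (indep_insert (indep_insert (indep_insert hAindep ?_) ?_) ?_) ?_
        · intro y hy hadj
          exact hAnon y hy z hzD hadj.symm
        · intro y hy
          rcases hy with h | hy
          · subst h
            intro hadj
            exact hz3 (hr.2.2 y hzD hadj.symm)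
          · intro hadj
            exact hv3A ((hr.2.2 y (hAsub hy) hadj.symm) ▸ hy)
        · intro y hy
          rcases hy with h | h | hy
          · subst h
            exact hcr.2
          · subst h
            intro hadj
            exact hz2 (hp2.2.2 y hzD hadj.symm)
          · intro hadj
            exact hv2A ((hp2.2.2 y (hAsub hy) hadj.symm) ▸ hy)
        · intro y hy
          rcases hy with h | h | h | hy
          · subst h
            exact hp12
          · subst h
            exact hcr.1
          · subst h
            intro hadj
            exact hz1 (hp1.2.2 y hzD hadj.symm)
          · intro hadj
            exact hv1A ((hp1.2.2 y (hAsub hy) hadj.symm) ▸ hy)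
      · intro y hy
        obtain ⟨hyD, hyS⟩ := hy
        have hyA : y ∉ A := fun h => hyS (Set.mem_insert_of_mem _ (Set.mem_insert_of_mem _
          (Set.mem_insert_of_mem _ (Set.mem_insert_of_mem _ h))))
        have hyDA : y ∈ ({z, v1, v2, v3} : Set V) := hDA ▸ (⟨hyD, hyA⟩ : y ∈ D \ A)
        rcases hyDA with rfl | rfl | rfl | rfl
        · exact absurd (Set.mem_insert_of_mem _ (Set.mem_insert_of_mem _
            (Set.mem_insert_of_mem _ (Set.mem_insert _ _)))) hyS
        · exact ⟨p1, ⟨Set.mem_insert _ _, hp1D⟩, hp1.2.1.symm⟩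
        · exact ⟨p2, ⟨Set.mem_insert_of_mem _ (Set.mem_insert _ _), hp2D⟩, hp2.2.1.symm⟩
        · exact ⟨r, ⟨Set.mem_insert_of_mem _ (Set.mem_insert_of_mem _ (Set.mem_insert _ _)),
            hrD⟩, hr.2.1.symm⟩
    -- every private of z is adjacent to p1 or p2
    have hez : ∀ r, IsPrivateNbr G D z r → G.Adj p1 r ∨ G.Adj p2 r := by
      intro r hr
      by_contra hcr
      push_neg at hcr
      have hrD : r ∉ D := hr.1
      refine hL ⟨insert p1 (insert p2 (insert r (insert v3 A))), ?_, ?_⟩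
      · refine indep_insert (indep_insert (indep_insert (indep_insert hAindep ?_) ?_) ?_) ?_
        · intro y hy hadj
          exact hAnon y hy v3 hv3D hadj.symm
        · intro y hy
          rcases hy with h | hy
          · subst h
            intro hadj
            exact hz3 (hr.2.2 y hv3D hadj.symm).symm
          · intro hadj
            exact hzA ((hr.2.2 y (hAsub hy) hadj.symm) ▸ hy)
        · intro y hy
          rcases hy with h | h | hy
          · subst h
            exact hcr.2
          · subst h
            intro hadj
            exact h23 (hp2.2.2 y hv3D hadj.symm).symm
          · intro hadj
            exact hv2A ((hp2.2.2 y (hAsub hy) hadj.symm) ▸ hy)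
        · intro y hy
          rcases hy with h | h | h | hy
          · subst h
            exact hp12
          · subst h
            exact hcr.1
          · subst h
            intro hadj
            exact h13 (hp1.2.2 y hv3D hadj.symm).symm
          · intro hadj
            exact hv1A ((hp1.2.2 y (hAsub hy) hadj.symm) ▸ hy)
      · intro y hy
        obtain ⟨hyD, hyS⟩ := hy
        have hyA : y ∉ A := fun h => hyS (Set.mem_insert_of_mem _ (Set.mem_insert_of_mem _
          (Set.mem_insert_of_mem _ (Set.mem_insert_of_mem _ h))))
        have hyDA : y ∈ ({z, v1, v2, v3} : Set V) := hDA ▸ (⟨hyD, hyA⟩ : y ∈ D \ A)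
        rcases hyDA with rfl | rfl | rfl | rfl
        · exact ⟨r, ⟨Set.mem_insert_of_mem _ (Set.mem_insert_of_mem _ (Set.mem_insert _ _)),
            hrD⟩, hr.2.1.symm⟩
        · exact ⟨p1, ⟨Set.mem_insert _ _, hp1D⟩, hp1.2.1.symm⟩
        · exact ⟨p2, ⟨Set.mem_insert_of_mem _ (Set.mem_insert _ _), hp2D⟩, hp2.2.1.symm⟩
        · exact absurd (Set.mem_insert_of_mem _ (Set.mem_insert_of_mem _
            (Set.mem_insert_of_mem _ (Set.mem_insert _ _)))) hyS
    -- final exchange: replace {z, v3} by {p1, p2}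
    set D'' : Set V := insert p1 (insert p2 (D \ {z, v3})) with hD''def
    have hApair : ∀ u ∈ A, u ∈ D \ ({z, v3} : Set V) := by
      intro u hu
      refine ⟨hAsub hu, ?_⟩
      rintro (rfl | rfl)
      · exact hzA hu
      · exact hv3A hu
    have hv1mem : v1 ∈ D \ ({z, v3} : Set V) := by
      refine ⟨hv1D, ?_⟩
      rintro (rfl | rfl)
      · exact hz1 rfl
      · exact h13 rfl
    have hv2mem : v2 ∈ D \ ({z, v3} : Set V) := by
      refine ⟨hv2D, ?_⟩
      rintro (rfl | rfl)
      · exact hz2 rfl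
      · exact h23 rfl
    have hdom'' : IsDomSet G D'' := by
      intro y
      by_cases hyD'' : y ∈ D''
      · exact Or.inl hyD''
      right
      by_cases hyz : y = z
      · subst hyz
        exact ⟨v1, Set.mem_insert_of_mem _ (Set.mem_insert_of_mem _ hv1mem), hzadj1⟩
      by_cases hy3 : y = v3
      · subst hy3
        exact ⟨v1, Set.mem_insert_of_mem _ (Set.mem_insert_of_mem _ hv1mem), hadj13⟩
      have hyD : y ∉ D := by
        intro h
        refine hyD'' (Set.mem_insert_of_mem _ (Set.mem_insert_of_mem _ ⟨h, ?_⟩))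
        rintro (rfl | rfl)
        · exact hyz rfl
        · exact hy3 rfl
      by_cases hexu : ∃ u ∈ D, G.Adj u y ∧ u ≠ z ∧ u ≠ v3
      · obtain ⟨u, huD, hadj, huz, hu3⟩ := hexu
        refine ⟨u, Set.mem_insert_of_mem _ (Set.mem_insert_of_mem _ ⟨huD, ?_⟩), hadj⟩
        rintro (rfl | rfl)
        · exact huz rfl
        · exact hu3 rfl
      push_neg at hexu
      have hux : ∀ u ∈ D, G.Adj u y → u = z ∨ u = v3 := by
        intro u hu hadj
        by_cases h : u = z
        · exact Or.inl h
        · exact Or.inr (hexu u hu hadj h)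
      by_cases hz' : G.Adj z y
      · by_cases h3' : G.Adj v3 y
        · exact absurd (hQ y hyD hz' h3' hux) (fun h => h)
        · have hzpriv : IsPrivateNbr G D z y := by
            refine ⟨hyD, hz', ?_⟩
            intro u hu hadj
            rcases hux u hu hadj with h | h
            · exact h
            · exact absurd (h ▸ hadj) (fun hh => h3' (by exact hh))
          rcases hez y hzpriv with h | h
          · exact ⟨p1, Set.mem_insert _ _, h⟩
          · exact ⟨p2, Set.mem_insert_of_mem _ (Set.mem_insert _ _), h⟩
      · have h3'' : G.Adj v3 y := by
          rcases hdom y with h | ⟨u, huD, hadj⟩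
          · exact absurd h hyD
          rcases hux u huD hadj with h | h
          · exact absurd (h ▸ hadj) hz'
          · exact h ▸ hadj
        have h3priv : IsPrivateNbr G D v3 y := by
          refine ⟨hyD, h3'', ?_⟩
          intro u hu hadj
          rcases hux u hu hadj with h | h
          · exact absurd (h ▸ hadj) hz'
          · exact h
        rcases he3 y h3priv with h | h
        · exact ⟨p1, Set.mem_insert _ _, h⟩
        · exact ⟨p2, Set.mem_insert_of_mem _ (Set.mem_insert _ _), h⟩
    have hzv3sub : ({z, v3} : Set V) ⊆ D := by
      rintro u (rfl | rfl)
      · exact hzD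
      · exact hv3D
    have hcard'' : D''.ncard = gamma G := by
      have hpairc : ({z, v3} : Set V).ncard = 2 := by
        rw [Set.ncard_insert_of_notMem (by simp [hz3]) (Set.toFinite _), Set.ncard_singleton]
      have h1 : (D \ ({z, v3} : Set V)).ncard = D.ncard - 2 := by
        rw [Set.ncard_diff hzv3sub (Set.toFinite _), hpairc]
      have h2 : p2 ∉ D \ ({z, v3} : Set V) := fun h => hp2D h.1
      have h3 : p1 ∉ insert p2 (D \ ({z, v3} : Set V)) := by
        rintro (rfl | h)
        · exact hp1p2 rfl
        · exact hp1D h.1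
      have h4 : D''.ncard = (D \ ({z, v3} : Set V)).ncard + 2 := by
        rw [hD''def, Set.ncard_insert_of_notMem h3 (Set.toFinite _),
          Set.ncard_insert_of_notMem h2 (Set.toFinite _)]
      have hDge : 2 ≤ D.ncard := by
        have := Set.ncard_le_ncard hzv3sub (Set.toFinite _)
        omega
      omega
    have halge'' : alphaOn G D ≤ alphaOn G D'' := by
      have hsub : insert v1 A ⊆ D'' := by
        intro y hy
        rcases hy with rfl | hy
        · exact Set.mem_insert_of_mem _ (Set.mem_insert_of_mem _ hv1mem)
        · exact Set.mem_insert_of_mem _ (Set.mem_insert_of_mem _ (hApair y hy))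
      have hi : IsIndep G (insert v1 A) :=
        indep_insert hAindep (fun y hy hadj => hAnon y hy v1 hv1D hadj.symm)
      have hc : (insert v1 A).ncard = a + 1 := by
        rw [Set.ncard_insert_of_notMem hv1A (Set.toFinite _), ha]
      have := le_alphaOn hsub hi
      omega
    have haleq'' : alphaOn G D'' = alphaOn G D :=
      le_antisymm (hmax D'' hdom'' hcard'') halge''
    have hmle'' := hmin D'' hdom'' hcard'' haleq''
    -- edge count comparison
    have hE4sub : ({s(z, v1), s(z, v2), s(z, v3), s(v1, v2)} : Set (Sym2 V)) ⊆
        {e ∈ G.edgeSet | ∀ w ∈ e, w ∈ D} := by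
      rintro e (rfl | rfl | rfl | rfl)
      · exact mem_edgeFilter.mpr ⟨hzadj1.symm, hzD, hv1D⟩
      · exact mem_edgeFilter.mpr ⟨hzadj2.symm, hzD, hv2D⟩
      · exact mem_edgeFilter.mpr ⟨hzadj3.symm, hzD, hv3D⟩
      · exact mem_edgeFilter.mpr ⟨hadj12, hv1D, hv2D⟩
    have hE4c : ({s(z, v1), s(z, v2), s(z, v3), s(v1, v2)} : Set (Sym2 V)).ncard = 4 := by
      have n1 : s(z, v1) ∉ ({s(z, v2), s(z, v3), s(v1, v2)} : Set (Sym2 V)) := by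
        intro hmem
        rcases hmem with h | h | h
        · exact sym2_ne' hz1.symm h12 h
        · exact sym2_ne' hz1.symm h13 h
        · exact sym2_ne hz1 hz2 h
      have n2 : s(z, v2) ∉ ({s(z, v3), s(v1, v2)} : Set (Sym2 V)) := by
        intro hmem
        rcases hmem with h | h
        · exact sym2_ne' hz2.symm h23 h
        · exact sym2_ne hz1 hz2 h
      have n3 : s(z, v3) ∉ ({s(v1, v2)} : Set (Sym2 V)) := by
        intro hmem
        exact sym2_ne hz1 hz2 (Set.mem_singleton_iff.mp hmem)
      rw [Set.ncard_insert_of_notMem n1 (Set.toFinite _),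
        Set.ncard_insert_of_notMem n2 (Set.toFinite _),
        Set.ncard_insert_of_notMem n3 (Set.toFinite _), Set.ncard_singleton]
    have hE4le : 4 ≤ edgeCountOn G D := by
      rw [← hE4c]
      exact Set.ncard_le_ncard hE4sub (Set.toFinite _)
    -- the edge set of D'' is contained in three explicit edges
    have hU3sub : {e ∈ G.edgeSet | ∀ w ∈ e, w ∈ D''} ⊆
        ({s(v1, v2), s(p1, v1), s(p2, v2)} : Set (Sym2 V)) := by
      intro e he
      induction e using Sym2.ind with
      | _ u w =>
        rw [mem_edgeFilter] at he
        obtain ⟨hadj, hu, hw⟩ := he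
        have hcase : ∀ m : V, m ∈ D'' → m = p1 ∨ m = p2 ∨ m ∈ D \ ({z, v3} : Set V) := by
          intro m hm
          rcases hm with rfl | rfl | hm
          · exact Or.inl rfl
          · exact Or.inr (Or.inl rfl)
          · exact Or.inr (Or.inr hm)
        -- classify endpoints
        rcases hcase u hu with rfl | rfl | huD
        · -- u = p1
          rcases hcase w hw with rfl | rfl | hwD
          · exact absurd hadj (G.irrefl)
          · exact absurd hadj hp12
          · have : w = v1 := hp1.2.2 w hwD.1 hadj.symm
            subst this
            exact Or.inr (Or.inl rfl)
        · -- u = p2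
          rcases hcase w hw with rfl | rfl | hwD
          · exact absurd hadj (fun h => hp12 h.symm)
          · exact absurd hadj (G.irrefl)
          · have : w = v2 := hp2.2.2 w hwD.1 hadj.symm
            subst this
            exact Or.inr (Or.inr (Set.mem_singleton_iff.mpr rfl))
        · rcases hcase w hw with rfl | rfl | hwD
          · have : u = v1 := hp1.2.2 u huD.1 hadj
            subst this
            exact Or.inr (Or.inl Sym2.eq_swap)
          · have : u = v2 := hp2.2.2 u huD.1 hadj
            subst this
            exact Or.inr (Or.inr (Set.mem_singleton_iff.mpr Sym2.eq_swap))
          · -- both in D \ {z, v3}: they are v1 and v2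
            have huA : u ∉ A := fun h => hAnon u h w hwD.1 hadj
            have hwA : w ∉ A := fun h => hAnon w h u huD.1 hadj.symm
            have hu4 : u ∈ ({z, v1, v2, v3} : Set V) := hDA ▸ (⟨huD.1, huA⟩ : u ∈ D \ A)
            have hw4 : w ∈ ({z, v1, v2, v3} : Set V) := hDA ▸ (⟨hwD.1, hwA⟩ : w ∈ D \ A)
            have huz : u ≠ z := fun h => huD.2 (Or.inl h)
            have hu3 : u ≠ v3 := fun h => huD.2 (Or.inr (Set.mem_singleton_iff.mpr h))
            have hwz : w ≠ z := fun h => hwD.2 (Or.inl h)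
            have hw3 : w ≠ v3 := fun h => hwD.2 (Or.inr (Set.mem_singleton_iff.mpr h))
            rcases hu4 with rfl | rfl | rfl | rfl
            · exact absurd rfl huz
            · rcases hw4 with rfl | rfl | rfl | rfl
              · exact absurd rfl hwz
              · exact absurd hadj (G.irrefl)
              · exact Or.inl rfl
              · exact absurd rfl hw3
            · rcases hw4 with rfl | rfl | rfl | rfl
              · exact absurd rfl hwz
              · exact Or.inl Sym2.eq_swap
              · exact absurd hadj (G.irrefl)
              · exact absurd rfl hw3
            · exact absurd rfl hu3
    have hU3le : edgeCountOn G D'' ≤ 3 := by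
      have h1 : ({s(v1, v2), s(p1, v1), s(p2, v2)} : Set (Sym2 V)).ncard ≤ 3 := by
        refine le_trans (Set.ncard_insert_le _ _) ?_
        have := Set.ncard_insert_le (s(p1, v1)) ({s(p2, v2)} : Set (Sym2 V))
        simp only [Set.ncard_singleton] at this
        omega
      exact le_trans (Set.ncard_le_ncard hU3sub (Set.toFinite _)) h1
    omega
  exact ⟨⟨bulletA1, bulletA2⟩, bullet2, bullet3⟩
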